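/- Let (R, m) be a Noetherian local ring and let x_1, …, x_d ∈ m be a regular sequence. Then for all integers l, r ≥ 1, one has the equality of ideals (x_1^l, …, x_d^l) : (x_1, …, x_d)^r = (x_1, …, x_d)^{dl-r-d+1} + (x_1^l, …, x_d^l), where by convention (x_1, …, x_d)^k = R whenever k ≤ 0. -/

import Mathlib

open TensorProduct

universe u v

section TightClosureBasics

variable (R : Type u) [CommRing R]

/-- `R°`: the set of elements of `R` not contained in any minimal prime ideal. -/
def Rcirc : Set R := {c | ∀ P ∈ minimalPrimes R, c ∉ P}

/-- `I^{[q]}`: the ideal generated by the `q`-th powers of elements of `I`. -/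
def idealBracketPow (I : Ideal R) (q : ℕ) : Ideal R :=
  Ideal.span ((fun x => x ^ q) '' (I : Set R))

/-- The `a`-tight closure `I^{*a}` of an ideal `I ⊆ R` (as a subset of `R`):
all `z` such that for some `c ∈ R°` one has `c z^q a^q ⊆ I^{[q]}` for all `q = p^e ≫ 0`. -/
def idealTC (p : ℕ) (a I : Ideal R) : Set R :=
  {z | ∃ c ∈ Rcirc R, ∃ e₀ : ℕ, ∀ e, e₀ ≤ e → ∀ α ∈ a ^ p ^ e,
    c * z ^ p ^ e * α ∈ idealBracketPow R I (p ^ e)}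

variable (p : ℕ) [Fact p.Prime] [CharP R p]

/-- `ᵉR`: the ring `R` viewed as an `R`-algebra via the `e`-fold Frobenius
`x ↦ x ^ p ^ e`. -/
def FrobAlg (_p _e : ℕ) : Type u := R

instance (e : ℕ) : CommRing (FrobAlg R p e) := inferInstanceAs (CommRing R)

noncomputable instance (e : ℕ) : Algebra R (FrobAlg R p e) :=
  RingHom.toAlgebra (iterateFrobenius R p e)

/-- The Frobenius functor `F^e(M) = ᵉR ⊗_R M`, an `R`-module via the left factor. -/
def FrobPow (e : ℕ) (M : Type v) [AddCommGroup M] [Module R M] : Type (max u v) :=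
  TensorProduct R (FrobAlg R p e) M

variable {M : Type v} [AddCommGroup M] [Module R M]

noncomputable instance (e : ℕ) : AddCommGroup (FrobPow R p e M) :=
  inferInstanceAs (AddCommGroup (TensorProduct R (FrobAlg R p e) M))

noncomputable instance (e : ℕ) : Module R (FrobPow R p e M) :=
  inferInstanceAs (Module (FrobAlg R p e) (TensorProduct R (FrobAlg R p e) M))

/-- The `e`-times iterated Frobenius map `M → F^e(M)`, `z ↦ z^q := 1 ⊗ z`. -/
noncomputable def frobM (e : ℕ) (z : M) : FrobPow R p e M :=
  (1 : FrobAlg R p e) ⊗ₜ[R] z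

/-- `N^{[q]}_M`: the image of `F^e(N) → F^e(M)`, i.e. the `R`-span of the image of
`N` under the Frobenius map `M → F^e(M)`. -/
noncomputable def bracketPow (e : ℕ) (N : Submodule R M) : Submodule R (FrobPow R p e M) :=
  Submodule.span R (frobM R p e '' (N : Set M))

/-- The `a`-tight closure `N^{*a}_M` of a submodule `N ⊆ M`: all `z ∈ M` such that for
some `c ∈ R°` one has `c z^q a^q ⊆ N^{[q]}_M` for all `q = p^e ≫ 0`. -/
noncomputable def modTC (a : Ideal R) (N : Submodule R M) : Set M :=
  {z | ∃ c ∈ Rcirc R, ∃ e₀ : ℕ, ∀ e, e₀ ≤ e → ∀ α ∈ a ^ p ^ e,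
    (c * α) • frobM R p e z ∈ bracketPow R p e N}

/-- The annihilator ideal of a subset of a module. -/
def setAnn (S : Set M) : Ideal R where
  carrier := {r | ∀ z ∈ S, r • z = 0}
  add_mem' := by
    intro r s hr hs z hz
    rw [add_smul, hr z hz, hs z hz, add_zero]
  zero_mem' := by
    intro z _
    rw [zero_smul]
  smul_mem' := by
    intro c r hr z hz
    rw [smul_eq_mul, mul_smul, hr z hz, smul_zero]

/-- `τ(a)`: the intersection, over all finitely generated `R`-modules `M`, of
`Ann_R (0^{*a}_M)`. -/
noncomputable def tauIdeal (a : Ideal R) : Ideal R where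
  carrier := {r | ∀ (N : Type u) [AddCommGroup N] [Module R N], Module.Finite R N →
      ∀ z ∈ modTC R p a (⊥ : Submodule R N), r • z = 0}
  add_mem' := by
    intro r s hr hs N _ _ hN z hz
    rw [add_smul, hr N hN z hz, hs N hN z hz, add_zero]
  zero_mem' := by
    intro N _ _ _ z _
    rw [zero_smul]
  smul_mem' := by
    intro c r hr N _ _ hN z hz
    rw [smul_eq_mul, mul_smul, hr N hN z hz, smul_zero]

end TightClosureBasics

section RegularExcellent

/-- A regular local ring: a Noetherian local ring whose maximal ideal can be generated
by `dim R` elements. -/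
def IsRegularLocal (A : Type v) [CommRing A] : Prop :=
  ∃ h : IsLocalRing A, letI := h
  IsNoetherianRing A ∧
    ∃ s : Finset A, Ideal.span (s : Set A) = IsLocalRing.maximalIdeal A ∧
      (s.card : WithBot ℕ∞) = ringKrullDim A

/-- A `k`-algebra `C` over a field `k` is geometrically regular if for every finite field
extension `k'` of `k` all localizations of `k' ⊗_k C` at primes are regular local rings. -/
def IsGeometricallyRegular (k : Type u) (C : Type u) [Field k] [CommRing C] [Algebra k C] :
    Prop :=
  ∀ (k' : Type u) [Field k'] [Algebra k k'], Module.Finite k k' →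
    ∀ (Q : Ideal (TensorProduct k k' C)) (hQ : Q.IsPrime), letI := hQ
      IsRegularLocal (Localization.AtPrime Q)

/-- `A` is a G-ring (Grothendieck ring): for every prime `P` of `A` the fibres of the
completion map `A_P → (A_P)^` are geometrically regular. -/
def IsGRing (A : Type u) [CommRing A] : Prop :=
  ∀ (P : Ideal A) (hP : P.IsPrime), letI := hP
    ∀ (Q : Ideal (Localization.AtPrime P)) (hQ : Q.IsPrime), letI := hQ
      IsGeometricallyRegular
        (IsLocalRing.ResidueField (Localization.AtPrime Q))
        (TensorProduct (Localization.AtPrime P)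
          (IsLocalRing.ResidueField (Localization.AtPrime Q))
          (AdicCompletion (IsLocalRing.maximalIdeal (Localization.AtPrime P))
            (Localization.AtPrime P)))

/-- A ring is catenary if any two saturated chains of primes with the same endpoints
have the same length. -/
def IsCatenary (A : Type*) [CommRing A] : Prop :=
  ∀ c d : LTSeries (PrimeSpectrum A),
    (∀ i : Fin c.length, c.toFun i.castSucc ⋖ c.toFun i.succ) →
    (∀ i : Fin d.length, d.toFun i.castSucc ⋖ d.toFun i.succ) →
    c.head = d.head → c.last = d.last → c.length = d.length

/-- `A` is J-2: the regular locus of every finitely generated `A`-algebra is open. -/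
def IsJ2 (A : Type u) [CommRing A] : Prop :=
  ∀ (n : ℕ) (I : Ideal (MvPolynomial (Fin n) A)),
    IsOpen {P : PrimeSpectrum (MvPolynomial (Fin n) A ⧸ I) |
      IsRegularLocal (Localization.AtPrime P.asIdeal)}

/-- An excellent ring: a Noetherian, universally catenary G-ring satisfying J-2. -/
def IsExcellent (A : Type u) [CommRing A] : Prop :=
  IsNoetherianRing A ∧ (∀ n : ℕ, IsCatenary (MvPolynomial (Fin n) A)) ∧
    IsGRing A ∧ IsJ2 A

/-- A ring is equidimensional if all its minimal primes have the same dimension. -/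
def IsEquidimensional (A : Type*) [CommRing A] : Prop :=
  ∀ P ∈ minimalPrimes A, ringKrullDim (A ⧸ P) = ringKrullDim A

end RegularExcellent

section Misc

variable (R : Type u) [CommRing R]

/-- `x : Fin n → A` is a system of parameters of the local ring `A`: `n = dim A` and
the `x i` generate an ideal primary to the maximal ideal. -/
def IsSOP (A : Type v) [CommRing A] [IsLocalRing A] (n : ℕ) (x : Fin n → A) : Prop :=
  (n : WithBot ℕ∞) = ringKrullDim A ∧
    (Ideal.span (Set.range x)).radical = IsLocalRing.maximalIdeal A

/-- A local ring is F-rational if every ideal generated by a system of parameters is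
tightly closed. -/
def IsFRational (A : Type v) [CommRing A] [IsLocalRing A] (p : ℕ) : Prop :=
  ∀ (n : ℕ) (x : Fin n → A), IsSOP A n x →
    idealTC A p ⊤ (Ideal.span (Set.range x)) = (Ideal.span (Set.range x) : Set A)

/-- The tight integral closure `{I_1, …, I_n}^{⎯*}` of a family of ideals. -/
def tightIntClosure (p : ℕ) {n : ℕ} (I : Fin n → Ideal R) : Set R :=
  {x | ∃ c ∈ Rcirc R, ∃ e₀ : ℕ, ∀ e, e₀ ≤ e → c * x ^ p ^ e ∈ ∑ i, (I i) ^ p ^ e}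

/-- The integral closure of an ideal `J`: all elements satisfying an integral equation
`x^n + a_1 x^{n-1} + ⋯ + a_n = 0` with `a_i ∈ J^i`. -/
def integralClosureOfIdeal (J : Ideal R) : Set R :=
  {x | ∃ n : ℕ, 0 < n ∧ ∃ a : ℕ → R, (∀ i ∈ Finset.range n, a i ∈ J ^ (i + 1)) ∧
    x ^ n + ∑ i ∈ Finset.range n, a i * x ^ (n - 1 - i) = 0}

/-- `x_1, …, x_n` are parameters: the ideal generated by the first `i` of them has
height at least `i`, for each `i`. -/
def AreParameters {n : ℕ} (x : Fin n → R) : Prop :=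
  ∀ i : ℕ, i ≤ n → ∀ (P : Ideal R) (hP : P.IsPrime),
    Ideal.span (x '' {j : Fin n | (j : ℕ) < i}) ≤ P →
      (i : ℕ∞) ≤ Order.height (⟨P, hP⟩ : PrimeSpectrum R)

/-- A regular sequence: each `x i` is a non-zerodivisor modulo its predecessors. -/
def IsRegSeq {n : ℕ} (x : Fin n → R) : Prop :=
  ∀ i : Fin n, ∀ z : R,
    x i * z ∈ Ideal.span (x '' {j : Fin n | j < i}) →
      z ∈ Ideal.span (x '' {j : Fin n | j < i})

/-- A prime ideal of height one. -/
def IsHeightOnePrime (P : Ideal R) : Prop :=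
  ∃ hP : P.IsPrime, Order.height (⟨P, hP⟩ : PrimeSpectrum R) = 1

/-- The `r`-th symbolic power of a (divisorial) ideal `J` in a normal domain:
the intersection of the height-one primary components `J^r R_P ∩ R`. -/
def symbolicPow (J : Ideal R) (r : ℕ) : Ideal R where
  carrier := {x | ∀ P : Ideal R, IsHeightOnePrime R P → ∃ s ∉ P, s * x ∈ J ^ r}
  zero_mem' := by
    intro P hP
    obtain ⟨hP', -⟩ := hP
    exact ⟨1, (Ideal.ne_top_iff_one P).mp hP'.ne_top, by simp⟩
  add_mem' := by
    intro x y hx hy P hP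
    obtain ⟨s, hs, hsx⟩ := hx P hP
    obtain ⟨t, ht, hty⟩ := hy P hP
    obtain ⟨hP', -⟩ := hP
    refine ⟨s * t, fun hmem => ?_, ?_⟩
    · rcases hP'.mem_or_mem hmem with h | h
      · exact hs h
      · exact ht h
    · have heq : s * t * (x + y) = t * (s * x) + s * (t * y) := by ring
      rw [heq]
      exact Ideal.add_mem _ (Ideal.mul_mem_left _ _ hsx) (Ideal.mul_mem_left _ _ hty)
  smul_mem' := by
    intro c x hx P hP
    obtain ⟨s, hs, hsx⟩ := hx P hP
    refine ⟨s, hs, ?_⟩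
    have heq : s * (c • x) = c * (s * x) := by
      simp only [smul_eq_mul]; ring
    rw [heq]
    exact Ideal.mul_mem_left _ _ hsx

/-- Data of an injective hull `E = E_A(A/m)` of the residue field of a local ring:
an injective module together with an essential embedding of the residue field. -/
structure InjectiveHullRF (A : Type u) [CommRing A] [IsLocalRing A] where
  E : Type u
  [acg : AddCommGroup E]
  [mod : Module A E]
  injective : Module.Injective A E
  emb : (A ⧸ IsLocalRing.maximalIdeal A) →ₗ[A] E
  emb_inj : Function.Injective emb
  essential : ∀ N : Submodule A E, N ≠ ⊥ → N ⊓ LinearMap.range emb ≠ ⊥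

attribute [instance] InjectiveHullRF.acg InjectiveHullRF.mod

/-- `ω` is a canonical ideal of the local ring `A`: an ideal whose Matlis dual is the
top local cohomology module `H^d_m(A)`. -/
def IsCanonicalIdeal (A : Type u) [CommRing A] [IsLocalRing A] (ω : Ideal A) : Prop :=
  ∃ d : ℕ, ringKrullDim A = d ∧
    ∃ hull : InjectiveHullRF A,
      Nonempty ((ω →ₗ[A] hull.E) ≃ₗ[A]
        ((localCohomology (IsLocalRing.maximalIdeal A) d).obj (ModuleCat.of A A)))

/-- A normal local ring is `ℚ`-Gorenstein if it admits a canonical module (here realized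
as a canonical ideal `ω`) some symbolic power `ω^{(r)}`, `r ≥ 1`, of which is principal,
i.e. isomorphic to `A`. -/
def IsQGorenstein (A : Type u) [CommRing A] [IsLocalRing A] : Prop :=
  ∃ ω : Ideal A, ω ≠ ⊥ ∧ IsCanonicalIdeal A ω ∧
    ∃ r : ℕ, 1 ≤ r ∧ ∃ f : A, symbolicPow A ω r = Ideal.span {f}

variable (p : ℕ) [Fact p.Prime] [CharP R p]

/-- `ᵉR` as an `R`-module via restriction of scalars along the `e`-fold Frobenius:
`r • x = r ^ (p ^ e) * x`. -/
def FrobRestrict (_p _e : ℕ) : Type u := R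

instance (e : ℕ) : AddCommGroup (FrobRestrict R p e) := inferInstanceAs (AddCommGroup R)

noncomputable instance (e : ℕ) : Module R (FrobRestrict R p e) :=
  Module.compHom R (iterateFrobenius R p e)

/-- `R` is F-finite: `¹R` is a finitely generated `R`-module. -/
def IsFFinite : Prop := Module.Finite R (FrobRestrict R p 1)

/-- A reduced ring `A` of characteristic `p` is strongly F-regular if for every
`c ∈ A°` there is `q = p^e` such that the inclusion `c^{1/q} A ⊆ A^{1/q}` splits
`A`-linearly; equivalently (identifying `A^{1/q}` with `A` via the `q`-th power map)
there is an additive map `φ : A → A` with `φ (r^q * x) = r * φ x` for all `r, x` and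
`φ c = 1`. -/
def StronglyFRegular (A : Type v) [CommRing A] (p : ℕ) : Prop :=
  ∀ c ∈ Rcirc A, ∃ e : ℕ, ∃ φ : A →+ A,
    (∀ r x : A, φ (r ^ p ^ e * x) = r * φ x) ∧ φ c = 1

/-- `c` is an `a`-test element: `c ∈ R°` and `c z^q a^q ⊆ I^{[q]}` for every ideal `I`,
every `z ∈ I^{*a}` and every `q = p^e`. -/
def IsTestElementFor (a : Ideal R) (c : R) : Prop :=
  c ∈ Rcirc R ∧
    ∀ I : Ideal R, ∀ z ∈ idealTC R p a I, ∀ e : ℕ, ∀ α ∈ a ^ p ^ e,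
      c * z ^ p ^ e * α ∈ idealBracketPow R I (p ^ e)

end Misc

namespace CPRS

open Ideal IsLocalRing

variable {R : Type u} [CommRing R]

/-- Regular sequence relative to a base ideal, in colon-ideal form. -/
def RSI (I : Ideal R) : List R → Prop
  | [] => True
  | a :: L => (∀ z : R, z * a ∈ I → z ∈ I) ∧ RSI (I ⊔ Ideal.span {a}) L

@[simp] lemma RSI_nil (I : Ideal R) : RSI I ([] : List R) := trivial

lemma RSI_cons {I : Ideal R} {a : R} {L : List R} :
    RSI I (a :: L) ↔ (∀ z : R, z * a ∈ I → z ∈ I) ∧ RSI (I ⊔ Ideal.span {a}) L := Iff.rfl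

lemma RSI_congr {I J : Ideal R} {L : List R} (h : I = J) (hL : RSI I L) : RSI J L := h ▸ hL

lemma RSI_top (L : List R) : ∀ (I : Ideal R), I = ⊤ → RSI I L := by
  induction L with
  | nil => intro I _; trivial
  | cons a L ih =>
    intro I hI
    exact ⟨fun z _ => by simp [hI], ih _ (by simp [hI])⟩

lemma mem_sup_span {I : Ideal R} {a z : R} :
    z ∈ I ⊔ Ideal.span {a} ↔ ∃ u ∈ I, ∃ c : R, z = u + c * a := by
  constructor
  · intro h
    obtain ⟨u, hu, v, hv, rfl⟩ := Submodule.mem_sup.mp h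
    obtain ⟨c, rfl⟩ := Ideal.mem_span_singleton'.mp hv
    exact ⟨u, hu, c, rfl⟩
  · rintro ⟨u, hu, c, rfl⟩
    exact Submodule.add_mem_sup hu (Ideal.mem_span_singleton'.mpr ⟨c, rfl⟩)

/-- key Nakayama step: if `a` is a nzd mod `I` and `b` is a nzd mod `I + (a)`,
with `a` in the maximal ideal, then `b` is a nzd mod `I`. -/
lemma nzd_swap₁ [IsLocalRing R] [IsNoetherianRing R] {I : Ideal R} {a b : R}
    (ha : a ∈ maximalIdeal R)
    (hA : ∀ z : R, z * a ∈ I → z ∈ I)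
    (hB : ∀ z : R, z * b ∈ I ⊔ Ideal.span {a} → z ∈ I ⊔ Ideal.span {a}) :
    ∀ z : R, z * b ∈ I → z ∈ I := by
  have key : I.colon (Ideal.span {b}) ≤ I := by
    apply Submodule.le_of_le_smul_of_le_jacobson_bot (I := Ideal.span {a})
      (IsNoetherian.noetherian _)
    · rw [IsLocalRing.jacobson_eq_maximalIdeal ⊥ bot_ne_top]
      exact (Ideal.span_le).mpr (by simpa using ha)
    · intro z hz
      have hzb : z * b ∈ I := by
        have := Submodule.mem_colon.mp hz b (Ideal.mem_span_singleton_self b)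
        simpa [smul_eq_mul, mul_comm] using this
      obtain ⟨u, hu, c, rfl⟩ := mem_sup_span.mp (hB z (Ideal.mem_sup_left hzb))
      refine Submodule.mem_sup.mpr ⟨u, hu, c * a, ?_, rfl⟩
      have hcb : c * b ∈ I := by
        apply hA
        have : c * b * a = (u + c * a) * b - u * b := by ring
        rw [this]
        exact Submodule.sub_mem _ hzb (Ideal.mul_mem_right _ _ hu)
      have hcmem : c ∈ I.colon (Ideal.span {b}) := by
        rw [Submodule.mem_colon]
        intro p hp
        obtain ⟨e, rfl⟩ := Ideal.mem_span_singleton'.mp hp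
        have : c • (e * b) = e * (c * b) := by simp [smul_eq_mul]; ring
        rw [this]
        exact Ideal.mul_mem_left _ _ hcb
      have : c * a = a • c := by simp [smul_eq_mul, mul_comm]
      rw [this]
      exact Submodule.smul_mem_smul (Ideal.mem_span_singleton_self a) hcmem
  intro z hz
  apply key
  rw [Submodule.mem_colon]
  intro p hp
  obtain ⟨e, rfl⟩ := Ideal.mem_span_singleton'.mp hp
  have : z • (e * b) = e * (z * b) := by simp [smul_eq_mul]; ring
  rw [this]
  exact Ideal.mul_mem_left _ _ hz


lemma RSI_swap [IsLocalRing R] [IsNoetherianRing R] {I : Ideal R} {a b : R} {L : List R}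
    (ha : a ∈ maximalIdeal R) (h : RSI I (a :: b :: L)) : RSI I (b :: a :: L) := by
  have h1 : ∀ z : R, z * a ∈ I → z ∈ I := h.1
  have h2 : ∀ z : R, z * b ∈ I ⊔ Ideal.span {a} → z ∈ I ⊔ Ideal.span {a} := h.2.1
  have h3 : RSI (I ⊔ Ideal.span {a} ⊔ Ideal.span {b}) L := h.2.2
  refine ⟨nzd_swap₁ ha h1 h2, ?_,
    RSI_congr (by rw [sup_assoc, sup_assoc, sup_comm (Ideal.span {a})]) h3⟩
  -- a is nzd mod I ⊔ (b)
  intro z hz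
  obtain ⟨u, hu, c, hzc⟩ := mem_sup_span.mp hz
  have hcb : c * b ∈ I ⊔ Ideal.span {a} := by
    have heq : c * b = z * a - u := by rw [hzc]; ring
    rw [heq]
    exact Submodule.sub_mem _
      (Ideal.mem_sup_right (Ideal.mem_span_singleton'.mpr ⟨z, rfl⟩)) (Ideal.mem_sup_left hu)
  obtain ⟨u', hu', c', hc'⟩ := mem_sup_span.mp (h2 c hcb)
  have hzi : (z - c' * b) * a ∈ I := by
    have heq : (z - c' * b) * a = u + u' * b := by
      have hz2 : z * a = u + c * b := hzc
      rw [hc'] at hz2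
      linear_combination hz2
    rw [heq]
    exact Submodule.add_mem _ hu (Ideal.mul_mem_right _ _ hu')
  have hfin := h1 _ hzi
  have hz3 : z = (z - c' * b) + c' * b := by ring
  rw [hz3]
  exact Submodule.add_mem _ (Ideal.mem_sup_left hfin)
    (Ideal.mem_sup_right (Ideal.mem_span_singleton'.mpr ⟨c', rfl⟩))


lemma span_mem_cons (a : R) (L : List R) :
    Ideal.span {t : R | t ∈ a :: L} = Ideal.span {a} ⊔ Ideal.span {t : R | t ∈ L} := by
  have : {t : R | t ∈ a :: L} = insert a {t : R | t ∈ L} := by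
    ext t; simp [List.mem_cons]
  rw [this, Ideal.span_insert]

lemma RSI_append {A : List R} : ∀ {B : List R} {I : Ideal R},
    RSI I (A ++ B) ↔ RSI I A ∧ RSI (I ⊔ Ideal.span {t : R | t ∈ A}) B := by
  induction A with
  | nil =>
    intro B I
    simp only [List.nil_append, RSI_nil, true_and]
    have : {t : R | t ∈ ([] : List R)} = ∅ := by ext t; simp
    rw [this, Ideal.span_empty, sup_bot_eq]
  | cons a A ih =>
    intro B I
    rw [List.cons_append, RSI_cons, RSI_cons, ih, span_mem_cons, and_assoc, ← sup_assoc]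

lemma RSI_perm [IsLocalRing R] [IsNoetherianRing R] {L L' : List R} (hp : L.Perm L') :
    ∀ (I : Ideal R), (∀ a ∈ L, a ∈ maximalIdeal R) → RSI I L → RSI I L' := by
  induction hp with
  | nil => exact fun I _ h => h
  | cons x p ih =>
    intro I hm h
    exact ⟨h.1, ih _ (fun a ha => hm a (List.mem_cons_of_mem _ ha)) h.2⟩
  | swap x y l =>
    intro I hm h
    exact RSI_swap (hm y (by simp)) h
  | trans p₁ p₂ ih₁ ih₂ =>
    intro I hm h
    exact ih₂ _ (fun a ha => hm a (p₁.mem_iff.mpr ha)) (ih₁ _ hm h)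

lemma nzd_pow {I : Ideal R} {a : R} (hA : ∀ z : R, z * a ∈ I → z ∈ I) (e : ℕ) :
    ∀ z : R, z * a ^ e ∈ I → z ∈ I := by
  induction e with
  | zero => intro z hz; simpa using hz
  | succ e ih =>
    intro z hz
    apply ih
    apply hA
    rw [mul_assoc, ← pow_succ]
    exact hz

lemma nzd_pow_mod {I : Ideal R} {a b : R}
    (hA : ∀ z : R, z * a ∈ I → z ∈ I)
    (hB : ∀ z : R, z * b ∈ I ⊔ Ideal.span {a} → z ∈ I ⊔ Ideal.span {a}) (n : ℕ) :
    ∀ z : R, z * b ∈ I ⊔ Ideal.span {a ^ n} → z ∈ I ⊔ Ideal.span {a ^ n} := by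
  induction n with
  | zero => intro z _; simp [Ideal.span_singleton_one]
  | succ n ih =>
    intro z hz
    have hle : Ideal.span {a ^ (n + 1)} ≤ Ideal.span {a} :=
      Ideal.span_singleton_le_span_singleton.mpr ⟨a ^ n, by ring⟩
    have hz' : z ∈ I ⊔ Ideal.span {a} := hB z (sup_le_sup_left hle I hz)
    obtain ⟨w, hw, c, rfl⟩ := mem_sup_span.mp hz'
    obtain ⟨u, hu, e, he⟩ := mem_sup_span.mp hz
    have hca : (c * b - e * a ^ n) * a ∈ I := by
      have heq : (c * b - e * a ^ n) * a = u - w * b := by linear_combination he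
      rw [heq]
      exact Submodule.sub_mem _ hu (Ideal.mul_mem_right _ _ hw)
    have hcb : c * b ∈ I ⊔ Ideal.span {a ^ n} := by
      have h1 := hA _ hca
      have : c * b = (c * b - e * a ^ n) + e * a ^ n := by ring
      rw [this]
      exact Submodule.add_mem _ (Ideal.mem_sup_left h1)
        (Ideal.mem_sup_right (Ideal.mem_span_singleton'.mpr ⟨e, rfl⟩))
    obtain ⟨w', hw', f, hf⟩ := mem_sup_span.mp (ih c hcb)
    have : w + c * a = (w + w' * a) + f * a ^ (n + 1) := by rw [hf]; ring
    rw [this]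
    exact Submodule.add_mem _
      (Ideal.mem_sup_left (Submodule.add_mem _ hw (Ideal.mul_mem_right _ _ hw')))
      (Ideal.mem_sup_right (Ideal.mem_span_singleton'.mpr ⟨f, rfl⟩))


lemma RSI_tail_pow [IsLocalRing R] [IsNoetherianRing R] {a : R} (ha : a ∈ maximalIdeal R)
    (n : ℕ) : ∀ (L : List R) (I : Ideal R), (∀ t ∈ L, t ∈ maximalIdeal R) →
    RSI I (a :: L) → RSI (I ⊔ Ideal.span {a ^ n}) L := by
  intro L
  induction L with
  | nil => intro I _ _; trivial
  | cons b L ih =>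
    intro I hm h
    have h1 : ∀ z : R, z * a ∈ I → z ∈ I := h.1
    have h2 : ∀ z : R, z * b ∈ I ⊔ Ideal.span {a} → z ∈ I ⊔ Ideal.span {a} := h.2.1
    refine ⟨nzd_pow_mod h1 h2 n, ?_⟩
    have hswap : RSI I (b :: a :: L) := RSI_swap ha h
    have htail : RSI (I ⊔ Ideal.span {b}) (a :: L) := hswap.2
    have := ih (I ⊔ Ideal.span {b}) (fun t ht => hm t (List.mem_cons_of_mem _ ht)) htail
    exact RSI_congr (by rw [sup_assoc, sup_assoc, sup_comm (Ideal.span {b})]) this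

lemma RSI_pow_head [IsLocalRing R] [IsNoetherianRing R] {I : Ideal R} {a : R} {L : List R}
    (ha : a ∈ maximalIdeal R) (hm : ∀ t ∈ L, t ∈ maximalIdeal R)
    (h : RSI I (a :: L)) (n : ℕ) : RSI I (a ^ n :: L) :=
  ⟨nzd_pow h.1 n, RSI_tail_pow ha n L I hm h⟩

lemma RSI_pow_prefix [IsLocalRing R] [IsNoetherianRing R] (n : ℕ) :
    ∀ (A : List R) {B : List R} {I : Ideal R}, (∀ t ∈ A ++ B, t ∈ maximalIdeal R) →
    RSI I (A ++ B) → RSI I (A.map (· ^ n) ++ B) := by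
  intro A
  induction A with
  | nil => intro B I _ h; exact h
  | cons a A ih =>
    intro B I hm h
    have hmem : ∀ t ∈ A ++ B, t ∈ maximalIdeal R :=
      fun t ht => hm t (List.mem_cons_of_mem _ ht)
    have h' : RSI I (a ^ n :: (A ++ B)) :=
      RSI_pow_head (hm a (by simp)) hmem h n
    exact ⟨h'.1, ih (B := B) (I := I ⊔ Ideal.span {a ^ n}) hmem h'.2⟩


lemma RSI_map_quotient {y : R} : ∀ (L : List R) (I : Ideal R), Ideal.span {y} ≤ I →
    RSI I L → RSI (I.map (Ideal.Quotient.mk (Ideal.span {y})))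
      (L.map (Ideal.Quotient.mk (Ideal.span {y}))) := by
  intro L
  induction L with
  | nil => intro I _ _; trivial
  | cons a L ih =>
    intro I hyI h
    constructor
    · intro zb hzb
      obtain ⟨z, rfl⟩ := Ideal.Quotient.mk_surjective zb
      rw [← _root_.map_mul] at hzb
      have hcm : z * a ∈ I := by
        have h2 := Ideal.mem_comap.mpr hzb
        rwa [Ideal.comap_map_of_surjective _ Ideal.Quotient.mk_surjective,
          ← RingHom.ker_eq_comap_bot, Ideal.mk_ker, sup_eq_left.mpr hyI] at h2
      exact Ideal.mem_map_of_mem _ (h.1 z hcm)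
    · have := ih (I ⊔ Ideal.span {a}) (le_sup_of_le_left hyI) h.2
      refine RSI_congr ?_ this
      rw [Ideal.map_sup, Ideal.map_span, Set.image_singleton]

lemma quot_mem_maximalIdeal [IsLocalRing R] {y t : R} (hy : y ∈ maximalIdeal R)
    (ht : t ∈ maximalIdeal R) [Nontrivial (R ⧸ Ideal.span {y})]
    [IsLocalRing (R ⧸ Ideal.span {y})] :
    Ideal.Quotient.mk (Ideal.span {y}) t ∈ maximalIdeal (R ⧸ Ideal.span {y}) := by
  rw [IsLocalRing.mem_maximalIdeal]
  intro hu
  obtain ⟨v, hv⟩ := isUnit_iff_exists_inv.mp hu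
  obtain ⟨s, rfl⟩ := Ideal.Quotient.mk_surjective v
  rw [← _root_.map_mul, ← map_one (Ideal.Quotient.mk (Ideal.span {y})),
    Ideal.Quotient.mk_eq_mk_iff_sub_mem] at hv
  obtain ⟨c, hc⟩ := Ideal.mem_span_singleton'.mp hv
  have h1 : (1 : R) ∈ maximalIdeal R := by
    have : (1 : R) = t * s - c * y := by linear_combination hc
    rw [this]
    exact Submodule.sub_mem _ (Ideal.mul_mem_right _ _ ht) (Ideal.mul_mem_left _ _ hy)
  exact (IsLocalRing.maximalIdeal.isMaximal R).ne_top (Ideal.eq_top_of_unit_mem _ _ 1 h1 (by simp))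

lemma sum_le_ideal {ι : Type*} (s : Finset ι) (f : ι → Ideal R) (T : Ideal R)
    (h : ∀ i ∈ s, f i ≤ T) : s.sum f ≤ T := by
  classical
  induction s using Finset.cons_induction with
  | empty => simp
  | cons a s has ih =>
    rw [Finset.sum_cons, Ideal.add_eq_sup]
    exact sup_le (h a (by simp)) (ih fun i hi => h i (Finset.mem_cons_of_mem hi))

lemma le_sum_ideal {ι : Type*} (s : Finset ι) (f : ι → Ideal R) {i : ι} (hi : i ∈ s) :
    f i ≤ s.sum f := by
  classical
  rw [← Finset.add_sum_erase s f hi, Ideal.add_eq_sup]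
  exact le_sup_left

lemma sup_pow_le (I J : Ideal R) : ∀ (s m k : ℕ), m + k = s →
    (I ⊔ J) ^ (s + 1) ≤ I ^ (m + 1) ⊔ J ^ (k + 1) := by
  intro s
  induction s with
  | zero =>
    intro m k hmk
    obtain ⟨rfl, rfl⟩ : m = 0 ∧ k = 0 := by omega
    simpa using le_rfl
  | succ s ih =>
    intro m k hmk
    rw [pow_succ]
    refine Ideal.mul_le.mpr fun b hb a ha => ?_
    rcases Submodule.mem_sup.mp ha with ⟨i, hi, j, hj, rfl⟩
    rw [mul_add]
    refine Submodule.add_mem _ ?_ ?_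
    · -- b * i ∈ I^(m+1) ⊔ J^(k+1)
      rcases Nat.eq_zero_or_pos m with rfl | hm
      · exact Ideal.mem_sup_left (by simpa using Ideal.mul_mem_left _ b hi)
      · obtain ⟨m', rfl⟩ := Nat.exists_eq_succ_of_ne_zero hm.ne'
        have hb' : b ∈ I ^ (m' + 1) ⊔ J ^ (k + 1) := ih m' k (by omega) hb
        rcases Submodule.mem_sup.mp hb' with ⟨b₁, hb₁, b₂, hb₂, rfl⟩
        rw [add_mul]
        refine Submodule.add_mem _ (Ideal.mem_sup_left ?_) (Ideal.mem_sup_right ?_)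
        · rw [pow_succ (n := m' + 1)]
          exact Ideal.mul_mem_mul hb₁ hi
        · exact Ideal.mul_mem_right _ _ hb₂
    · rcases Nat.eq_zero_or_pos k with rfl | hk
      · exact Ideal.mem_sup_right (by simpa using Ideal.mul_mem_left _ b hj)
      · obtain ⟨k', rfl⟩ := Nat.exists_eq_succ_of_ne_zero hk.ne'
        have hb' : b ∈ I ^ (m + 1) ⊔ J ^ (k' + 1) := ih m k' (by omega) hb
        rcases Submodule.mem_sup.mp hb' with ⟨b₁, hb₁, b₂, hb₂, rfl⟩
        rw [add_mul]
        refine Submodule.add_mem _ (Ideal.mem_sup_left ?_) (Ideal.mem_sup_right ?_)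
        · exact Ideal.mul_mem_right _ _ hb₁
        · rw [pow_succ (n := k' + 1)]
          exact Ideal.mul_mem_mul hb₂ hj

lemma range_succ_eq {α : Type*} {n : ℕ} (g : Fin (n + 1) → α) :
    Set.range g = Set.range (fun i : Fin n => g i.castSucc) ∪ {g (Fin.last n)} := by
  ext t
  constructor
  · rintro ⟨i, rfl⟩
    induction i using Fin.lastCases with
    | last => exact Or.inr rfl
    | cast i => exact Or.inl ⟨i, rfl⟩
  · rintro (⟨i, rfl⟩ | ht)
    · exact ⟨i.castSucc, rfl⟩
    · exact ⟨Fin.last n, ht.symm⟩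

lemma pow_le_bracket (l : ℕ) (hl : 1 ≤ l) : ∀ (n : ℕ) (g : Fin n → R),
    (Ideal.span (Set.range g)) ^ (n * (l - 1) + 1) ≤
      Ideal.span (Set.range fun i => g i ^ l) := by
  intro n
  induction n with
  | zero =>
    intro g
    rw [Set.range_eq_empty g, Ideal.span_empty]
    simpa using le_rfl
  | succ n ih =>
    intro g
    rw [range_succ_eq g, Ideal.span_union]
    have hexp : (n + 1) * (l - 1) + 1 = (n * (l - 1) + (l - 1)) + 1 := by ring
    rw [hexp]
    refine le_trans (sup_pow_le _ _ _ _ _ rfl) ?_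
    have h1 : (l - 1) + 1 = l := by omega
    rw [h1, Ideal.span_singleton_pow]
    refine sup_le (le_trans (ih _) ?_) ?_
    · apply Ideal.span_mono
      rintro t ⟨i, rfl⟩
      exact ⟨i.castSucc, rfl⟩
    · rw [Ideal.span_singleton_le_iff_mem]
      exact Ideal.subset_span ⟨Fin.last n, rfl⟩


lemma mem_sup_of_sub {I : Ideal R} {z c t : R} (h : z - c * t ∈ I) :
    z ∈ I ⊔ Ideal.span {t} := by
  have heq : z = (z - c * t) + c * t := by ring
  rw [heq]
  exact Submodule.add_mem _ (Ideal.mem_sup_left h)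
    (Ideal.mem_sup_right (Ideal.mem_span_singleton'.mpr ⟨c, rfl⟩))

lemma mul_single_le_sum {y : R} {J' : Ideal R} (e s q : ℕ) (g g' : ℕ → ℕ)
    (h : ∀ j, j < s → e + j < q ∧ g' (e + j) = g j) :
    Ideal.span {y ^ e} * ((Finset.range s).sum fun j => Ideal.span {y ^ j} * J' ^ (g j)) ≤
      (Finset.range q).sum fun j => Ideal.span {y ^ j} * J' ^ (g' j) := by
  rw [Finset.mul_sum]
  apply sum_le_ideal
  intro j hj
  rw [Finset.mem_range] at hj
  obtain ⟨h1, h2⟩ := h j hj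
  calc Ideal.span {y ^ e} * (Ideal.span {y ^ j} * J' ^ (g j))
      = Ideal.span {y ^ (e + j)} * J' ^ (g j) := by
        rw [← mul_assoc, Ideal.span_singleton_mul_span_singleton, ← pow_add]
    _ = Ideal.span {y ^ (e + j)} * J' ^ (g' (e + j)) := by rw [h2]
    _ ≤ _ := le_sum_ideal (Finset.range q)
        (fun j => Ideal.span {y ^ j} * J' ^ (g' j)) (Finset.mem_range.mpr h1)

lemma mul_sup_sum_le {y : R} {J' K' : Ideal R} (e s q : ℕ) (g g' : ℕ → ℕ)
    (h : ∀ j, j < s → e + j < q ∧ g' (e + j) = g j) (he : e + s = q) :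
    Ideal.span {y ^ e} *
      ((Finset.range s).sum (fun j => Ideal.span {y ^ j} * J' ^ (g j)) ⊔ K'
        ⊔ Ideal.span {y ^ s}) ≤
      (Finset.range q).sum (fun j => Ideal.span {y ^ j} * J' ^ (g' j)) ⊔ K'
        ⊔ Ideal.span {y ^ q} := by
  rw [Ideal.mul_sup, Ideal.mul_sup]
  refine sup_le (sup_le ?_ ?_) ?_
  · exact le_trans (mul_single_le_sum e s q g g' h) (le_sup_of_le_left le_sup_left)
  · exact le_trans Ideal.mul_le_right (le_sup_of_le_left le_sup_right)
  · rw [Ideal.span_singleton_mul_span_singleton, ← pow_add, he]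
    exact le_sup_right

lemma W {J' K' : Ideal R} {y : R} {D : ℕ}
    (hdiv : ∀ z : R, z * y ∈ K' → z ∈ K')
    (hpig : J' ^ (D + 1) ≤ K')
    (hquot : ∀ (r'' : ℕ) (w : R), (∀ mm ∈ J' ^ r'', w * mm ∈ K' ⊔ Ideal.span {y}) →
        w ∈ J' ^ (D + 1 - r'') ⊔ K' ⊔ Ideal.span {y}) :
    ∀ (q r' : ℕ) (w : R),
      (∀ k, k ≤ min r' q → ∀ mm ∈ J' ^ (r' - k), w * mm ∈ K' ⊔ Ideal.span {y ^ (q - k)}) →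
      w ∈ (Finset.range q).sum (fun j => Ideal.span {y ^ j} * J' ^ (D + q - (r' + j)))
          ⊔ K' ⊔ Ideal.span {y ^ q} := by
  intro q
  induction q using Nat.strong_induction_on with
  | _ q IHq =>
  intro r' w hw
  rcases Nat.eq_zero_or_pos q with rfl | hq1
  · simp only [pow_zero, Ideal.span_singleton_one, sup_top_eq]
    trivial
  rcases lt_or_ge r' q with hA | hB
  · -- Case A : r' < q
    have h0 : w ∈ K' ⊔ Ideal.span {y ^ (q - r')} := by
      have h1 := hw r' (by omega) 1 (by rw [Nat.sub_self, pow_zero, Ideal.one_eq_top]; trivial)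
      simpa using h1
    obtain ⟨u, hu, v, hveq⟩ := mem_sup_span.mp h0
    have hsysv : ∀ k, k ≤ min r' r' → ∀ mm ∈ J' ^ (r' - k),
        v * mm ∈ K' ⊔ Ideal.span {y ^ (r' - k)} := by
      intro k hk mm hmm
      have hk' : k ≤ r' := by omega
      obtain ⟨u₁, hu₁, c₁, hc₁⟩ := mem_sup_span.mp (hw k (by omega) mm hmm)
      apply mem_sup_of_sub (c := c₁)
      apply nzd_pow hdiv (q - r')
      have hyy : y ^ (r' - k) * y ^ (q - r') = y ^ (q - k) := by
        rw [← pow_add]; congr 1; omega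
      have heq : (v * mm - c₁ * y ^ (r' - k)) * y ^ (q - r') = u₁ - u * mm := by
        rw [sub_mul, mul_assoc c₁, hyy]
        linear_combination hc₁ - mm * hveq
      rw [heq]
      exact Submodule.sub_mem _ hu₁ (Ideal.mul_mem_right _ _ hu)
    have hv' := IHq r' hA r' v hsysv
    have hgg : ∀ j, j < r' →
        (q - r' + j < q ∧ D + q - (r' + (q - r' + j)) = D + r' - (r' + j)) := by
      intro j hj; omega
    have hmem1 : v * y ^ (q - r') ∈ Ideal.span {y ^ (q - r')} *
        ((Finset.range r').sum (fun j => Ideal.span {y ^ j} * J' ^ (D + r' - (r' + j)))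
          ⊔ K' ⊔ Ideal.span {y ^ r'}) := by
      rw [mul_comm v (y ^ (q - r'))]
      exact Ideal.mul_mem_mul (Ideal.mem_span_singleton_self _) hv'
    have hfin : v * y ^ (q - r') ∈
        (Finset.range q).sum (fun j => Ideal.span {y ^ j} * J' ^ (D + q - (r' + j)))
          ⊔ K' ⊔ Ideal.span {y ^ q} :=
      mul_sup_sum_le (q - r') r' q (fun j => D + r' - (r' + j))
        (fun j => D + q - (r' + j)) (fun j hj => hgg j hj) (by omega) hmem1
    rw [hveq]
    exact Submodule.add_mem _ (Ideal.mem_sup_left (Ideal.mem_sup_right hu)) hfin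
  · -- Case B : q ≤ r'
    have hsys1 : ∀ mm ∈ J' ^ (r' - (q - 1)), w * mm ∈ K' ⊔ Ideal.span {y} := by
      intro mm hmm
      have h1 := hw (q - 1) (by omega) mm hmm
      have h2 : q - (q - 1) = 1 := by omega
      rwa [h2, pow_one] at h1
    have hqt := hquot (r' - (q - 1)) w hsys1
    have hexp : D + 1 - (r' - (q - 1)) = D + q - r' := by omega
    rw [hexp] at hqt
    obtain ⟨h₀, hh₀, c, hc⟩ := mem_sup_span.mp hqt
    obtain ⟨aa, haa, uu, huu, h₀eq⟩ := Submodule.mem_sup.mp hh₀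
    have hsysc : ∀ k, k ≤ min r' (q - 1) → ∀ mm ∈ J' ^ (r' - k),
        c * mm ∈ K' ⊔ Ideal.span {y ^ (q - 1 - k)} := by
      intro k hk mm hmm
      have hk1 : k ≤ q - 1 := le_trans hk (min_le_right _ _)
      obtain ⟨u₁, hu₁, c₁, hc₁⟩ := mem_sup_span.mp (hw k (by omega) mm hmm)
      have hamm : aa * mm ∈ K' := by
        apply hpig
        have h1 : aa * mm ∈ J' ^ (D + q - r') * J' ^ (r' - k) := Ideal.mul_mem_mul haa hmm
        have h2 : J' ^ (D + q - r') * J' ^ (r' - k) ≤ J' ^ (D + 1) := by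
          rw [← pow_add]; exact Ideal.pow_le_pow_right (by omega)
        exact h2 h1
      apply mem_sup_of_sub (c := c₁)
      apply hdiv
      have hyy : y ^ (q - 1 - k) * y = y ^ (q - k) := by
        rw [← pow_succ]; congr 1; omega
      have heq : (c * mm - c₁ * y ^ (q - 1 - k)) * y = u₁ - aa * mm - uu * mm := by
        rw [sub_mul, mul_assoc c₁, hyy]
        linear_combination hc₁ - mm * hc + mm * h₀eq
      rw [heq]
      exact Submodule.sub_mem _ (Submodule.sub_mem _ hu₁ hamm) (Ideal.mul_mem_right _ _ huu)
    have hc' := IHq (q - 1) (by omega) r' c hsysc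
    have hw2 : w = aa + uu + c * y := by rw [hc, ← h₀eq]
    rw [hw2]
    refine Submodule.add_mem _ (Submodule.add_mem _ ?_ ?_) ?_
    · -- aa ∈ J'^{D+q-r'} = term at j = 0
      refine Ideal.mem_sup_left (Ideal.mem_sup_left ?_)
      refine le_sum_ideal (Finset.range q) _ (Finset.mem_range.mpr hq1) ?_
      rw [pow_zero, Ideal.span_singleton_one, top_mul, Nat.add_zero]
      exact haa
    · exact Ideal.mem_sup_left (Ideal.mem_sup_right huu)
    · have hgg : ∀ j, j < q - 1 →
          (1 + j < q ∧ D + q - (r' + (1 + j)) = D + (q - 1) - (r' + j)) := by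
        intro j hj; omega
      have hmem1 : c * y ∈ Ideal.span {y} *
          ((Finset.range (q - 1)).sum
              (fun j => Ideal.span {y ^ j} * J' ^ (D + (q - 1) - (r' + j)))
            ⊔ K' ⊔ Ideal.span {y ^ (q - 1)}) := by
        rw [mul_comm c y]
        exact Ideal.mul_mem_mul (Ideal.mem_span_singleton_self _) hc'
      have hle := mul_sup_sum_le (y := y) (J' := J') (K' := K') 1 (q - 1) q
        (fun j => D + (q - 1) - (r' + j)) (fun j => D + q - (r' + j))
        (fun j hj => hgg j hj) (by omega)
      rw [pow_one] at hle
      exact hle hmem1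


theorem aux : ∀ (d : ℕ) (R : Type u) [CommRing R] [IsLocalRing R] [IsNoetherianRing R]
    (x : Fin d → R), (∀ i, x i ∈ maximalIdeal R) → RSI ⊥ (List.ofFn x) →
    ∀ l r : ℕ, 1 ≤ l →
    (Ideal.span (Set.range fun i => x i ^ l)).colon (((Ideal.span (Set.range x)) ^ r : Ideal R) : Set R) =
      (Ideal.span (Set.range x)) ^ (d * (l - 1) + 1 - r) ⊔
        Ideal.span (Set.range fun i => x i ^ l) := by
  intro d
  induction d with
  | zero =>
    intro R _ _ _ x hx hreg l r hl
    rw [Set.range_eq_empty x, Set.range_eq_empty (fun i : Fin 0 => x i ^ l), Ideal.span_empty]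
    rcases Nat.eq_zero_or_pos r with rfl | hr
    · rw [pow_zero, Ideal.one_eq_top, Submodule.top_coe, Submodule.colon_top]
      simp
    · have hbot : (⊥ : Ideal R) ^ r = ⊥ := by
        rw [← Ideal.zero_eq_bot, zero_pow hr.ne']
      rw [hbot]
      have hcol : (⊥ : Ideal R).colon ((⊥ : Ideal R) : Set R) = ⊤ := by
        rw [eq_top_iff]
        intro z _
        rw [Submodule.mem_colon]
        intro p hp
        rw [SetLike.mem_coe, Submodule.mem_bot] at hp
        rw [hp, smul_zero]
        exact Submodule.zero_mem _
      rw [hcol]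
      have hexp : 0 * (l - 1) + 1 - r = 0 := by omega
      rw [hexp, pow_zero, Ideal.one_eq_top, top_sup_eq]
  | succ d' IH =>
    intro R _ _ _ x hx hreg l r hl
    have hdl : (d' + 1) * (l - 1) + 1 = d' * (l - 1) + l := by
      rw [add_mul, one_mul]; omega
    -- notation
    let y : R := x (Fin.last d')
    let x' : Fin d' → R := fun i => x i.castSucc
    let J' : Ideal R := Ideal.span (Set.range x')
    let K' : Ideal R := Ideal.span (Set.range fun i => x' i ^ l)
    have hJ : Ideal.span (Set.range x) = J' ⊔ Ideal.span {y} := by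
      rw [range_succ_eq x, Ideal.span_union]
    have hK : Ideal.span (Set.range fun i => x i ^ l) = K' ⊔ Ideal.span {y ^ l} := by
      rw [range_succ_eq (fun i => x i ^ l), Ideal.span_union]
    have hJ'le : J' ≤ Ideal.span (Set.range x) := by
      rw [hJ]; exact le_sup_left
    have hyJ : y ∈ Ideal.span (Set.range x) := by
      rw [hJ]; exact Ideal.mem_sup_right (Ideal.mem_span_singleton_self y)
    have hofn : List.ofFn x = List.ofFn x' ++ [y] := by
      rw [List.ofFn_succ', List.concat_eq_append]
    have hmemall : ∀ t ∈ List.ofFn x' ++ [y], t ∈ maximalIdeal R := by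
      intro t ht
      rcases List.mem_append.mp ht with h | h
      · obtain ⟨i, rfl⟩ := List.mem_ofFn.mp h
        exact hx _
      · rw [List.mem_singleton] at h
        rw [h]
        exact hx _
    have hreg' : RSI (⊥ : Ideal R) (List.ofFn x' ++ [y]) := hofn ▸ hreg
    have hregpow : RSI (⊥ : Ideal R) ((List.ofFn x').map (· ^ l) ++ [y]) :=
      RSI_pow_prefix l (List.ofFn x') hmemall hreg'
    have hsetK' : Ideal.span {t : R | t ∈ (List.ofFn x').map (· ^ l)} = K' := by
      congr 1
      ext s
      simp only [Set.mem_setOf_eq, List.mem_map, List.mem_ofFn, Set.mem_range]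
      constructor
      · rintro ⟨a, ⟨i, rfl⟩, rfl⟩
        exact ⟨i, rfl⟩
      · rintro ⟨i, rfl⟩
        exact ⟨x' i, ⟨i, rfl⟩, rfl⟩
    have hdivK' : RSI K' [y] := by
      refine RSI_congr ?_ (RSI_append.mp hregpow).2
      rw [bot_sup_eq, hsetK']
    have hdiv1 : ∀ z : R, z * y ∈ K' → z ∈ K' := hdivK'.1
    have hpig : J' ^ (d' * (l - 1) + 1) ≤ K' := pow_le_bracket l hl d' x'
    -- quotient ring facts
    have hrot : RSI (⊥ : Ideal R) (y :: List.ofFn x') :=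
      RSI_perm (List.perm_append_comm (l₁ := List.ofFn x') (l₂ := [y])) ⊥ hmemall hreg'
    have hregq : RSI (Ideal.span {y}) (List.ofFn x') := RSI_congr (by rw [bot_sup_eq]) hrot.2
    have hyne : Ideal.span {y} ≠ ⊤ := by
      intro hcon
      have hle : Ideal.span {y} ≤ maximalIdeal R := by
        rw [Ideal.span_le]
        simpa using hx (Fin.last d')
      exact (IsLocalRing.maximalIdeal.isMaximal R).ne_top (top_le_iff.mp (hcon ▸ hle))
    haveI : Nontrivial (R ⧸ Ideal.span {y}) := Ideal.Quotient.nontrivial_iff.mpr hyne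
    haveI : IsLocalRing (R ⧸ Ideal.span {y}) :=
      IsLocalRing.of_surjective' _ Ideal.Quotient.mk_surjective
    have hxbar : ∀ i : Fin d', Ideal.Quotient.mk (Ideal.span {y}) (x' i) ∈
        maximalIdeal (R ⧸ Ideal.span {y}) :=
      fun i => quot_mem_maximalIdeal (hx (Fin.last d')) (hx _)
    have hregbar : RSI (⊥ : Ideal (R ⧸ Ideal.span {y}))
        (List.ofFn fun i => Ideal.Quotient.mk (Ideal.span {y}) (x' i)) := by
      have h1 := RSI_map_quotient (List.ofFn x') (Ideal.span {y}) le_rfl hregq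
      rw [Ideal.map_quotient_self] at h1
      have h2 : (List.ofFn x').map (Ideal.Quotient.mk (Ideal.span {y})) =
          List.ofFn fun i => Ideal.Quotient.mk (Ideal.span {y}) (x' i) := by
        rw [List.map_ofFn]
        rfl
      rwa [h2] at h1
    -- the quotient step
    have hquot : ∀ (r'' : ℕ) (w : R), (∀ mm ∈ J' ^ r'', w * mm ∈ K' ⊔ Ideal.span {y}) →
        w ∈ J' ^ (d' * (l - 1) + 1 - r'') ⊔ K' ⊔ Ideal.span {y} := by
      intro r'' w hsys
      have heq := IH (R ⧸ Ideal.span {y}) (fun i => Ideal.Quotient.mk (Ideal.span {y}) (x' i))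
        hxbar hregbar l r'' hl
      have hmapJ : Ideal.span (Set.range fun i => Ideal.Quotient.mk (Ideal.span {y}) (x' i)) =
          Ideal.map (Ideal.Quotient.mk (Ideal.span {y})) J' := by
        rw [Ideal.map_span, ← Set.range_comp]
        rfl
      have hmapK : Ideal.span (Set.range fun i =>
            (Ideal.Quotient.mk (Ideal.span {y})) (x' i) ^ l) =
          Ideal.map (Ideal.Quotient.mk (Ideal.span {y})) K' := by
        rw [Ideal.map_span, ← Set.range_comp]
        congr 1
      rw [hmapJ, hmapK] at heq
      have hcolon : Ideal.Quotient.mk (Ideal.span {y}) w ∈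
          (Ideal.map (Ideal.Quotient.mk (Ideal.span {y})) K').colon
            (((Ideal.map (Ideal.Quotient.mk (Ideal.span {y})) J') ^ r'' : Ideal (R ⧸ Ideal.span {y})) : Set (R ⧸ Ideal.span {y})) := by
        rw [Submodule.mem_colon]
        intro p hp
        have hp' : p ∈ Ideal.map (Ideal.Quotient.mk (Ideal.span {y})) (J' ^ r'') := by
          rwa [Ideal.map_pow]
        obtain ⟨mm, hmm, rfl⟩ := Ideal.mem_image_of_mem_map_of_surjective _
          Ideal.Quotient.mk_surjective hp'
        obtain ⟨u, hu, c, hceq⟩ := mem_sup_span.mp (hsys mm hmm)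
        have hsm : Ideal.Quotient.mk (Ideal.span {y}) w • Ideal.Quotient.mk (Ideal.span {y}) mm
            = Ideal.Quotient.mk (Ideal.span {y}) (w * mm) := by
          rw [smul_eq_mul, ← _root_.map_mul]
        have hy0 : Ideal.Quotient.mk (Ideal.span {y}) y = 0 := by
          rw [Ideal.Quotient.eq_zero_iff_mem]
          exact Ideal.mem_span_singleton_self y
        rw [hsm, hceq, map_add, _root_.map_mul, hy0, mul_zero, add_zero]
        exact Ideal.mem_map_of_mem _ hu
      rw [heq] at hcolon
      have h1 : Ideal.Quotient.mk (Ideal.span {y}) w ∈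
          Ideal.map (Ideal.Quotient.mk (Ideal.span {y}))
            (J' ^ (d' * (l - 1) + 1 - r'') ⊔ K') := by
        rwa [Ideal.map_sup, Ideal.map_pow]
      have h2 := Ideal.mem_comap.mpr h1
      rwa [Ideal.comap_map_of_surjective _ Ideal.Quotient.mk_surjective,
        ← RingHom.ker_eq_comap_bot, Ideal.mk_ker] at h2
    -- main equality
    apply le_antisymm
    · intro z hz
      have hsys : ∀ k, k ≤ min r l → ∀ mm ∈ J' ^ (r - k),
          z * mm ∈ K' ⊔ Ideal.span {y ^ (l - k)} := by
        intro k hk mm hmm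
        have hkr : k ≤ r := le_trans hk (min_le_left _ _)
        have hkl : k ≤ l := le_trans hk (min_le_right _ _)
        have hmmJ : mm * y ^ k ∈ (Ideal.span (Set.range x)) ^ r := by
          have h1 : mm ∈ (Ideal.span (Set.range x)) ^ (r - k) :=
            Ideal.pow_right_mono hJ'le _ hmm
          have h2 : y ^ k ∈ (Ideal.span (Set.range x)) ^ k := Ideal.pow_mem_pow hyJ k
          have h3 := Ideal.mul_mem_mul h1 h2
          rwa [← pow_add, Nat.sub_add_cancel hkr] at h3
        have hzK := Submodule.mem_colon.mp hz _ hmmJ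
        rw [smul_eq_mul, hK] at hzK
        obtain ⟨u, hu, cc, hcc⟩ := mem_sup_span.mp hzK
        apply mem_sup_of_sub (c := cc)
        apply nzd_pow hdiv1 k
        have hyy : y ^ (l - k) * y ^ k = y ^ l := by
          rw [← pow_add]; congr 1; omega
        have heq : (z * mm - cc * y ^ (l - k)) * y ^ k = u := by
          rw [sub_mul, mul_assoc cc, hyy]
          linear_combination hcc
        rw [heq]
        exact hu
      have hWz := W hdiv1 hpig hquot l r z hsys
      have hfinal : (Finset.range l).sum
            (fun j => Ideal.span {y ^ j} * J' ^ (d' * (l - 1) + l - (r + j)))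
            ⊔ K' ⊔ Ideal.span {y ^ l} ≤
          (Ideal.span (Set.range x)) ^ ((d' + 1) * (l - 1) + 1 - r) ⊔
            Ideal.span (Set.range fun i => x i ^ l) := by
        refine sup_le (sup_le ?_ ?_) ?_
        · apply sum_le_ideal
          intro j hj
          rw [Finset.mem_range] at hj
          have h1 : Ideal.span {y ^ j} ≤ (Ideal.span (Set.range x)) ^ j := by
            rw [← Ideal.span_singleton_pow]
            exact Ideal.pow_right_mono (Ideal.span_le.mpr
              (Set.singleton_subset_iff.mpr hyJ)) _
          have h2 : J' ^ (d' * (l - 1) + l - (r + j)) ≤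
              (Ideal.span (Set.range x)) ^ (d' * (l - 1) + l - (r + j)) :=
            Ideal.pow_right_mono hJ'le _
          refine le_trans (Ideal.mul_mono h1 h2) ?_
          rw [← pow_add]
          exact le_sup_of_le_left (Ideal.pow_le_pow_right (by rw [hdl]; omega))
        · refine le_sup_of_le_right ?_
          rw [hK]; exact le_sup_left
        · refine le_sup_of_le_right ?_
          rw [hK]; exact le_sup_right
      exact hfinal hWz
    · intro z hz
      rw [Submodule.mem_colon]
      intro p hp
      rw [smul_eq_mul]
      have h1 : z * p ∈ ((Ideal.span (Set.range x)) ^ ((d' + 1) * (l - 1) + 1 - r) ⊔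
          Ideal.span (Set.range fun i => x i ^ l)) * (Ideal.span (Set.range x)) ^ r :=
        Ideal.mul_mem_mul hz hp
      have h2 : ((Ideal.span (Set.range x)) ^ ((d' + 1) * (l - 1) + 1 - r) ⊔
          Ideal.span (Set.range fun i => x i ^ l)) * (Ideal.span (Set.range x)) ^ r ≤
          Ideal.span (Set.range fun i => x i ^ l) := by
        rw [Ideal.sup_mul]
        refine sup_le ?_ Ideal.mul_le_left
        refine le_trans ?_ (pow_le_bracket l hl (d' + 1) x)
        rw [← pow_add]
        exact Ideal.pow_le_pow_right (by omega)
      exact h2 h1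


lemma RSI_of_forall : ∀ (L : List R) (I : Ideal R),
    (∀ (i : ℕ) (h : i < L.length) (z : R),
      z * L.get ⟨i, h⟩ ∈ I ⊔ Ideal.span {t : R | t ∈ L.take i} →
      z ∈ I ⊔ Ideal.span {t : R | t ∈ L.take i}) → RSI I L := by
  intro L
  induction L with
  | nil => intro I _; trivial
  | cons a L ih =>
    intro I h
    constructor
    · intro z hz
      have hset : Ideal.span {t : R | t ∈ (a :: L).take 0} = ⊥ := by
        have : {t : R | t ∈ (a :: L).take 0} = ∅ := by ext t; simp
        rw [this, Ideal.span_empty]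
      have h0 := h 0 (by simp) z
      rw [hset, sup_bot_eq] at h0
      exact h0 hz
    · apply ih
      intro i hi z hz
      have h' := h (i + 1) (by simpa using Nat.succ_lt_succ hi) z
      have hset : Ideal.span {t : R | t ∈ (a :: L).take (i + 1)} =
          Ideal.span {a} ⊔ Ideal.span {t : R | t ∈ L.take i} := by
        rw [List.take_succ_cons, span_mem_cons]
      rw [hset, ← sup_assoc] at h'
      exact h' hz


lemma take_ofFn_set {d : ℕ} (x : Fin d → R) (i : ℕ) (hi : i < d) :
    {t : R | t ∈ (List.ofFn x).take i} = x '' {j : Fin d | (j : ℕ) < i} := by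
  ext t
  simp only [Set.mem_setOf_eq, Set.mem_image]
  constructor
  · intro ht
    obtain ⟨k, hk, hget⟩ := List.mem_iff_getElem.mp ht
    have hk' : k < i ∧ k < d := by
      have := hk
      rw [List.length_take, List.length_ofFn] at this
      omega
    refine ⟨⟨k, hk'.2⟩, hk'.1, ?_⟩
    rw [← hget, List.getElem_take, List.getElem_ofFn]
  · rintro ⟨j, hj, rfl⟩
    have h1 : (List.ofFn x)[(j : ℕ)]'(by simpa using j.2) = x j := by
      simp [List.getElem_ofFn]
    apply List.mem_iff_getElem.mpr
    refine ⟨(j : ℕ), ?_, ?_⟩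
    · rw [List.length_take, List.length_ofFn]; omega
    · rw [List.getElem_take]
      simp [List.getElem_ofFn]


lemma RSI_ofFn_of_isRegSeq {d : ℕ} (x : Fin d → R)
    (h : IsRegSeq R x) : RSI (⊥ : Ideal R) (List.ofFn x) := by
  apply RSI_of_forall
  intro i hi z hz
  have hid : i < d := by simpa using hi
  have hget : (List.ofFn x).get ⟨i, hi⟩ = x ⟨i, hid⟩ := by
    simp [List.get_ofFn]
  rw [bot_sup_eq, take_ofFn_set x i hid] at hz ⊢
  rw [hget, mul_comm] at hz
  exact h ⟨i, hid⟩ z hz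

end CPRS

/-- **Lemma 2.11.** For a regular sequence `x_1, …, x_d` in a Noetherian local ring,
`(x_1^l, …, x_d^l) : (x_1, …, x_d)^r = (x_1, …, x_d)^{dl-r-d+1} + (x_1^l, …, x_d^l)`
for all `l, r ≥ 1`, with the convention `J^k = R` for `k ≤ 0`. -/

theorem colon_pow_of_regular_sequence
    (R : Type u) [CommRing R] [IsLocalRing R] [IsNoetherianRing R]
    (d : ℕ) (x : Fin d → R) (hxm : ∀ i, x i ∈ IsLocalRing.maximalIdeal R)
    (hreg : IsRegSeq R x) (l r : ℕ) (hl : 1 ≤ l) (hr : 1 ≤ r) :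
    (Ideal.span (Set.range fun i => x i ^ l)).colon (((Ideal.span (Set.range x)) ^ r : Ideal R) : Set R) =
      (if (d * l : ℤ) - r - d + 1 ≤ 0 then (⊤ : Ideal R)
        else (Ideal.span (Set.range x)) ^ ((d * l : ℤ) - r - d + 1).toNat) ⊔
        Ideal.span (Set.range fun i => x i ^ l) := by
  have hreg' : CPRS.RSI (⊥ : Ideal R) (List.ofFn x) := CPRS.RSI_ofFn_of_isRegSeq x hreg
  rw [CPRS.aux d R x hxm hreg' l r hl]
  congr 1
  have hcast : ((d * l : ℕ) : ℤ) = (d : ℤ) * (l : ℤ) := by push_cast; ring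
  have hmul : d * (l - 1) + d = d * l := by
    have h1 : l - 1 + 1 = l := by omega
    calc d * (l - 1) + d = d * ((l - 1) + 1) := by ring
      _ = d * l := by rw [h1]
  split_ifs with hc
  · rw [← hcast] at hc
    have he : d * (l - 1) + 1 - r = 0 := by omega
    rw [he, pow_zero, Ideal.one_eq_top]
  · rw [← hcast] at hc
    congr 1
    rw [← hcast]
    omega
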